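/- Let A, B, C be points of the Euclidean plane (EuclideanSpace ℝ (Fin 2)) and set a = dist(B,C), b = dist(A,C), c = dist(A,B). Assume a ≤ b ≤ c and c² < a² + b² + a·b. Then the infimum over all points P of the plane of dist(P,A) + dist(P,B) + dist(P,C) equals √((a² + b² + c² + 4√3·Δ)/2), where s = (a+b+c)/2 and Δ = √(s(s−a)(s−b)(s−c)). -/

import Mathlib

open Complex

local notation "conj'" => starRingEnd ℂ

noncomputable def Complex.abs : AbsoluteValue ℂ ℝ := IsAbsoluteValue.toAbsoluteValue (norm : ℂ → ℝ)

lemma Complex.abs_eq_norm' (z : ℂ) : Complex.abs z = ‖z‖ := rfl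

lemma Complex.abs_apply (z : ℂ) : Complex.abs z = Real.sqrt (Complex.normSq z) := Complex.norm_def z

lemma Complex.sq_abs (z : ℂ) : Complex.abs z ^ 2 = Complex.normSq z :=
  (Complex.normSq_eq_norm_sq z).symm

lemma Complex.normSq_eq_abs (z : ℂ) : Complex.normSq z = Complex.abs z ^ 2 :=
  Complex.normSq_eq_norm_sq z

lemma Complex.abs_ofReal (r : ℝ) : Complex.abs (r : ℂ) = |r| := by
  rw [Complex.abs_eq_norm']; exact Complex.norm_real r

lemma Complex.abs_conj (z : ℂ) : Complex.abs (conj' z) = Complex.abs z := Complex.norm_conj z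

lemma cdist_eq (z w : ℂ) : dist z w = Complex.abs (z - w) := Complex.dist_eq z w

-- quadratic upper bound on |z + d|
lemma abs_add_le_quad (z d : ℂ) (hz : z ≠ 0) :
    Complex.abs (z + d) ≤ Complex.abs z
      + (2 * ((conj' z) * d).re + Complex.abs d ^ 2) / (2 * Complex.abs z) := by
  set m := Complex.abs z with hm
  have hm0 : 0 < m := by simpa [hm] using (Complex.abs.pos hz)
  set h := 2 * ((conj' z) * d).re + Complex.abs d ^ 2 with hh
  have hexp : Complex.normSq (z + d) = m ^ 2 + h := by
    rw [hh, Complex.sq_abs, Complex.sq_abs]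
    simp [Complex.normSq_apply, Complex.mul_re, Complex.add_re, Complex.add_im]
    ring
  have hnn : 0 ≤ m ^ 2 + h := by rw [← hexp]; exact Complex.normSq_nonneg _
  have hrhs : 0 ≤ m + h / (2 * m) := by
    have : m + h / (2 * m) = (m ^ 2 + (m ^ 2 + h)) / (2 * m) := by field_simp; ring
    rw [this]
    positivity
  have : Complex.abs (z + d) = Real.sqrt (m ^ 2 + h) := by
    rw [Complex.abs_apply, hexp]
  rw [this]
  calc Real.sqrt (m ^ 2 + h) ≤ Real.sqrt ((m + h / (2 * m)) ^ 2) := by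
        apply Real.sqrt_le_sqrt
        have : (m + h / (2 * m)) ^ 2 = m ^ 2 + h + (h / (2 * m)) ^ 2 := by field_simp; ring
        nlinarith [sq_nonneg (h / (2 * m))]
    _ = m + h / (2 * m) := Real.sqrt_sq hrhs

lemma abs_add_le_quad' (v d : ℂ) (t : ℝ) (hv : v ≠ 0) :
    Complex.abs (v + t * d) ≤ Complex.abs v
      + (2 * t * ((conj' v) * d).re + t ^ 2 * Complex.abs d ^ 2) / (2 * Complex.abs v) := by
  have h := abs_add_le_quad v (t * d) hv
  have h1 : ((conj' v) * ((t : ℂ) * d)).re = t * ((conj' v) * d).re := by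
    rw [show (conj' v) * ((t : ℂ) * d) = (t : ℂ) * ((conj' v) * d) by ring, Complex.re_ofReal_mul]
  have h2 : Complex.abs ((t : ℂ) * d) ^ 2 = t ^ 2 * Complex.abs d ^ 2 := by
    rw [map_mul, Complex.abs_ofReal, mul_pow, sq_abs, _root_.sq_abs]
  rw [h1, h2] at h
  convert h using 3
  ring

noncomputable def om (r : ℝ) : ℂ := (⟨-(1/2), r/2⟩ : ℂ)

lemma om_re (r : ℝ) : (om r).re = -(1/2) := rfl
lemma om_im (r : ℝ) : (om r).im = r/2 := rfl

lemma om_sq (r : ℝ) (hr : r ^ 2 = 3) : (om r) ^ 2 = conj' (om r) := by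
  apply Complex.ext
  · simp [pow_two, Complex.mul_re, om_re, om_im]
    nlinarith [hr]
  · simp [pow_two, Complex.mul_im, om_re, om_im]
    ring
lemma om_normSq (r : ℝ) (hr : r ^ 2 = 3) : Complex.normSq (om r) = 1 := by
  simp [Complex.normSq_apply, om_re, om_im]
  nlinarith [hr]
lemma om_abs (r : ℝ) (hr : r ^ 2 = 3) : Complex.abs (om r) = 1 := by
  rw [Complex.abs_apply, om_normSq r hr, Real.sqrt_one]
lemma om_sum (r : ℝ) (hr : r ^ 2 = 3) : 1 + om r + (om r) ^ 2 = 0 := by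
  rw [om_sq r hr]
  apply Complex.ext <;> simp [om_re, om_im] <;> norm_num
lemma om_conj_sq (r : ℝ) (hr : r ^ 2 = 3) : conj' ((om r) ^ 2) = om r := by
  rw [om_sq r hr]
  simp
lemma om_diff (r : ℝ) (hr : r ^ 2 = 3) : om r - (om r) ^ 2 = (r : ℂ) * Complex.I := by
  rw [om_sq r hr]
  apply Complex.ext <;> simp [om_re, om_im] <;> ring

lemma units_structure (r : ℝ) (hr : r ^ 2 = 3) (u₁ u₂ u₃ : ℂ)
    (h1 : Complex.abs u₁ = 1) (h2 : Complex.abs u₂ = 1) (h3 : Complex.abs u₃ = 1)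
    (hsum : u₁ + u₂ + u₃ = 0) :
    (u₂ = u₁ * om r ∧ u₃ = u₁ * (om r) ^ 2) ∨ (u₂ = u₁ * (om r) ^ 2 ∧ u₃ = u₁ * om r) := by
  have hn1 : Complex.normSq u₁ = 1 := by rw [Complex.normSq_eq_abs, h1]; norm_num
  set v := conj' u₁ * u₂ with hvdef
  set w := conj' u₁ * u₃ with hwdef
  have hmul2 : u₁ * v = u₂ := by
    rw [hvdef, show u₁ * (conj' u₁ * u₂) = (u₁ * conj' u₁) * u₂ by ring, Complex.mul_conj, hn1]
    simp
  have hmul3 : u₁ * w = u₃ := by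
    rw [hwdef, show u₁ * (conj' u₁ * u₃) = (u₁ * conj' u₁) * u₃ by ring, Complex.mul_conj, hn1]
    simp
  have hnv : Complex.normSq v = 1 := by
    rw [hvdef, Complex.normSq_mul, Complex.normSq_conj, hn1, one_mul,
      Complex.normSq_eq_abs, h2]; norm_num
  have hnw : Complex.normSq w = 1 := by
    rw [hwdef, Complex.normSq_mul, Complex.normSq_conj, hn1, one_mul,
      Complex.normSq_eq_abs, h3]; norm_num
  have hvw : 1 + v + w = 0 := by
    have : conj' u₁ * (u₁ + u₂ + u₃) = 1 + v + w := by
      rw [mul_add, mul_add, hvdef, hwdef, show conj' u₁ * u₁ = u₁ * conj' u₁ by ring,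
        Complex.mul_conj, hn1]
      simp
    rw [← this, hsum, mul_zero]
  have hw : w = -1 - v := by linear_combination hvw
  have hre : v.re = -(1/2) := by
    rw [hw] at hnw
    simp [Complex.normSq_apply, Complex.sub_re, Complex.sub_im] at hnw
    simp [Complex.normSq_apply] at hnv
    nlinarith [hnv, hnw]
  have him : (v.im - r/2) * (v.im + r/2) = 0 := by
    simp [Complex.normSq_apply] at hnv
    nlinarith [hnv, hre, hr]
  rcases mul_eq_zero.mp him with h | h
  · left
    have hv : v = om r := by
      apply Complex.ext
      · rw [hre, om_re]
      · rw [om_im]; linarith [h]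
    constructor
    · rw [← hmul2, hv]
    · rw [← hmul3, hw, hv]
      have h0 := om_sum r hr
      congr 1
      linear_combination -h0
  · right
    have hv : v = (om r) ^ 2 := by
      rw [om_sq r hr]
      apply Complex.ext
      · rw [hre]; simp [om_re]
      · simp [om_im]; linarith [h]
    constructor
    · rw [← hmul2, hv]
    · rw [← hmul3, hw, hv]
      have h0 := om_sum r hr
      congr 1
      linear_combination -h0


lemma stationary (A B C P : ℂ) (h1 : P ≠ A) (h2 : P ≠ B) (h3 : P ≠ C)
    (hmin : ∀ z : ℂ, dist P A + dist P B + dist P C ≤ dist z A + dist z B + dist z C) :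
    (P - A) / (Complex.abs (P - A) : ℂ) + (P - B) / (Complex.abs (P - B) : ℂ)
      + (P - C) / (Complex.abs (P - C) : ℂ) = 0 := by
  by_contra hw
  set v₁ := P - A with hv₁def
  set v₂ := P - B with hv₂def
  set v₃ := P - C with hv₃def
  have hv₁ : v₁ ≠ 0 := sub_ne_zero.mpr h1
  have hv₂ : v₂ ≠ 0 := sub_ne_zero.mpr h2
  have hv₃ : v₃ ≠ 0 := sub_ne_zero.mpr h3
  set m₁ := Complex.abs v₁ with hm₁def
  set m₂ := Complex.abs v₂ with hm₂def
  set m₃ := Complex.abs v₃ with hm₃def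
  have hm₁ : 0 < m₁ := Complex.abs.pos hv₁
  have hm₂ : 0 < m₂ := Complex.abs.pos hv₂
  have hm₃ : 0 < m₃ := Complex.abs.pos hv₃
  set w := v₁ / (m₁ : ℂ) + v₂ / (m₂ : ℂ) + v₃ / (m₃ : ℂ) with hwdef
  set W := Complex.abs w with hWdef
  have hW : 0 < W := Complex.abs.pos hw
  -- linear coefficients
  have hre : ∀ v : ℂ, ∀ m : ℝ, m ≠ 0 → ((conj' (v / (m : ℂ))) * (-w)).re
      = ((conj' v) * (-w)).re / m := by
    intro v m hm
    rw [map_div₀, Complex.conj_ofReal, div_mul_eq_mul_div]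
    rw [Complex.div_ofReal_re]
  have hL : ((conj' v₁) * (-w)).re / m₁ + ((conj' v₂) * (-w)).re / m₂
      + ((conj' v₃) * (-w)).re / m₃ = -W ^ 2 := by
    rw [← hre v₁ m₁ hm₁.ne', ← hre v₂ m₂ hm₂.ne', ← hre v₃ m₃ hm₃.ne']
    have : (conj' (v₁ / (m₁:ℂ))) * (-w) + (conj' (v₂ / (m₂:ℂ))) * (-w)
        + (conj' (v₃ / (m₃:ℂ))) * (-w) = -(conj' w * w) := by
      rw [show (conj' (v₁ / (m₁:ℂ))) * (-w) + (conj' (v₂ / (m₂:ℂ))) * (-w)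
          + (conj' (v₃ / (m₃:ℂ))) * (-w)
          = conj' (v₁ / (m₁:ℂ) + v₂ / (m₂:ℂ) + v₃ / (m₃:ℂ)) * (-w) by
        rw [map_add, map_add]; ring, ← hwdef]
      ring
    have hre3 : (((conj' (v₁ / (m₁:ℂ))) * (-w)).re + ((conj' (v₂ / (m₂:ℂ))) * (-w)).re
        + ((conj' (v₃ / (m₃:ℂ))) * (-w)).re) = (-(conj' w * w)).re := by
      rw [← this]; simp [Complex.add_re]
    rw [hre3]
    rw [show conj' w * w = w * conj' w by ring, Complex.mul_conj, Complex.normSq_eq_abs]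
    rw [Complex.neg_re, Complex.ofReal_re, hWdef]
  -- choose t
  set S := 1 / (2 * m₁) + 1 / (2 * m₂) + 1 / (2 * m₃) with hSdef
  have hS : 0 < S := by positivity
  set t := 1 / (2 * S) with htdef
  have ht : 0 < t := by positivity
  set z := P + (t : ℂ) * (-w) with hzdef
  have hb1 : dist z A ≤ m₁ + (2 * t * ((conj' v₁) * (-w)).re + t ^ 2 * W ^ 2) / (2 * m₁) := by
    have : z - A = v₁ + (t : ℂ) * (-w) := by rw [hzdef, hv₁def]; ring
    rw [cdist_eq, this]
    simpa [hWdef] using abs_add_le_quad' v₁ (-w) t hv₁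
  have hb2 : dist z B ≤ m₂ + (2 * t * ((conj' v₂) * (-w)).re + t ^ 2 * W ^ 2) / (2 * m₂) := by
    have : z - B = v₂ + (t : ℂ) * (-w) := by rw [hzdef, hv₂def]; ring
    rw [cdist_eq, this]
    simpa [hWdef] using abs_add_le_quad' v₂ (-w) t hv₂
  have hb3 : dist z C ≤ m₃ + (2 * t * ((conj' v₃) * (-w)).re + t ^ 2 * W ^ 2) / (2 * m₃) := by
    have : z - C = v₃ + (t : ℂ) * (-w) := by rw [hzdef, hv₃def]; ring
    rw [cdist_eq, this]
    simpa [hWdef] using abs_add_le_quad' v₃ (-w) t hv₃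
  have hfP : dist P A + dist P B + dist P C = m₁ + m₂ + m₃ := by
    rw [cdist_eq, cdist_eq, cdist_eq]
  have hsum : (2 * t * ((conj' v₁) * (-w)).re + t ^ 2 * W ^ 2) / (2 * m₁)
      + (2 * t * ((conj' v₂) * (-w)).re + t ^ 2 * W ^ 2) / (2 * m₂)
      + (2 * t * ((conj' v₃) * (-w)).re + t ^ 2 * W ^ 2) / (2 * m₃)
      = t * (((conj' v₁) * (-w)).re / m₁ + ((conj' v₂) * (-w)).re / m₂
          + ((conj' v₃) * (-w)).re / m₃) + t ^ 2 * W ^ 2 * S := by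
    rw [hSdef]; field_simp; ring
  have hneg : t * (-W ^ 2) + t ^ 2 * W ^ 2 * S < 0 := by
    have htS : t * S = 1 / 2 := by rw [htdef]; field_simp
    have heq : t * (-W ^ 2) + t ^ 2 * W ^ 2 * S = -(t * W ^ 2) / 2 := by
      linear_combination (t * W ^ 2) * htS
    rw [heq]
    have : 0 < t * W ^ 2 := by positivity
    linarith
  have hzb : dist z A + dist z B + dist z C
      ≤ m₁ + m₂ + m₃ + (t * (-W ^ 2) + t ^ 2 * W ^ 2 * S) := by
    rw [hL] at hsum
    have h4 := add_le_add (add_le_add hb1 hb2) hb3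
    rw [show m₁ + (2 * t * ((conj' v₁) * (-w)).re + t ^ 2 * W ^ 2) / (2 * m₁)
      + (m₂ + (2 * t * ((conj' v₂) * (-w)).re + t ^ 2 * W ^ 2) / (2 * m₂))
      + (m₃ + (2 * t * ((conj' v₃) * (-w)).re + t ^ 2 * W ^ 2) / (2 * m₃))
      = m₁ + m₂ + m₃ + ((2 * t * ((conj' v₁) * (-w)).re + t ^ 2 * W ^ 2) / (2 * m₁)
      + (2 * t * ((conj' v₂) * (-w)).re + t ^ 2 * W ^ 2) / (2 * m₂)
      + (2 * t * ((conj' v₃) * (-w)).re + t ^ 2 * W ^ 2) / (2 * m₃)) by ring, hsum] at h4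
    exact h4
  have hmz := hmin z
  rw [hfP] at hmz
  linarith


lemma vertex_better (X Y Z : ℂ) (hY : Y ≠ X) (hZ : Z ≠ X)
    (hang : Complex.abs (Y - Z) ^ 2 < Complex.abs (X - Y) ^ 2 + Complex.abs (X - Z) ^ 2
        + Complex.abs (X - Y) * Complex.abs (X - Z)) :
    ∃ z : ℂ, dist z X + dist z Y + dist z Z < dist X Y + dist X Z := by
  set v₁ := X - Y with hv₁def
  set v₂ := X - Z with hv₂def
  have hv₁ : v₁ ≠ 0 := sub_ne_zero.mpr (Ne.symm hY)
  have hv₂ : v₂ ≠ 0 := sub_ne_zero.mpr (Ne.symm hZ)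
  set p := Complex.abs v₁ with hpdef
  set q := Complex.abs v₂ with hqdef
  have hp : 0 < p := Complex.abs.pos hv₁
  have hq : 0 < q := Complex.abs.pos hv₂
  set K := ((conj' v₁) * v₂).re with hKdef
  have e1 : p ^ 2 = v₁.re ^ 2 + v₁.im ^ 2 := by
    rw [hpdef, Complex.sq_abs, Complex.normSq_apply]; ring
  have e2 : q ^ 2 = v₂.re ^ 2 + v₂.im ^ 2 := by
    rw [hqdef, Complex.sq_abs, Complex.normSq_apply]; ring
  have hKval : K = v₁.re * v₂.re + v₁.im * v₂.im := by
    rw [hKdef]; simp [Complex.mul_re]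
  -- angle condition : 2K > -pq
  have hYZ : Complex.abs (Y - Z) ^ 2 = p ^ 2 + q ^ 2 - 2 * K := by
    rw [show Y - Z = v₂ - v₁ by rw [hv₁def, hv₂def]; ring]
    rw [Complex.sq_abs, Complex.normSq_apply, hKval]
    rw [e1, e2]; simp [Complex.sub_re, Complex.sub_im]; ring
  have hK : -(p * q) < 2 * K := by nlinarith [hang, hYZ]
  -- the direction w'
  set w : ℂ := (q : ℂ) * v₁ + (p : ℂ) * v₂ with hwdef
  set W := Complex.abs w with hWdef
  have hW2 : W ^ 2 = 2 * p ^ 2 * q ^ 2 + 2 * p * q * K := by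
    rw [hWdef, Complex.sq_abs, Complex.normSq_apply, hwdef, hKval]
    simp only [Complex.add_re, Complex.add_im, Complex.mul_re, Complex.mul_im,
      Complex.ofReal_re, Complex.ofReal_im]
    linear_combination (-(q ^ 2)) * e1 + (-(p ^ 2)) * e2
  have hWgt : p * q < W := by
    have h1 : (p * q) ^ 2 < W ^ 2 := by nlinarith [hW2, hK, mul_pos hp hq]
    have h2 : 0 ≤ W := Complex.abs.nonneg w
    nlinarith [h1, h2, mul_pos hp hq]
  have hW : 0 < W := lt_trans (mul_pos hp hq) hWgt
  have hw0 : w ≠ 0 := by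
    intro h
    rw [h] at hWdef
    simp at hWdef
    rw [hWdef] at hW
    exact lt_irrefl 0 hW
  -- inner products with w
  have hI1 : ((conj' v₁) * (-w)).re = -(q * p ^ 2 + p * K) := by
    rw [hKval, hwdef]
    simp only [Complex.mul_re, Complex.mul_im, Complex.neg_re, Complex.neg_im,
      Complex.add_re, Complex.add_im, Complex.ofReal_re, Complex.ofReal_im,
      Complex.conj_re, Complex.conj_im]
    linear_combination q * e1
  have hI2 : ((conj' v₂) * (-w)).re = -(q * K + p * q ^ 2) := by
    rw [hKval, hwdef]
    simp only [Complex.mul_re, Complex.mul_im, Complex.neg_re, Complex.neg_im,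
      Complex.add_re, Complex.add_im, Complex.ofReal_re, Complex.ofReal_im,
      Complex.conj_re, Complex.conj_im]
    linear_combination p * e2
  -- choose t
  obtain ⟨t, ht, hteq⟩ : ∃ t : ℝ, 0 < t ∧ t * (W * (p + q)) = W - p * q :=
    ⟨(W - p * q) / (W * (p + q)), div_pos (by linarith) (by positivity), by field_simp⟩
  -- the candidate point
  set z := X + (t : ℂ) * (-w) with hzdef
  have hzX : dist z X = t * W := by
    rw [cdist_eq, show z - X = (t : ℂ) * (-w) by rw [hzdef]; ring]
    rw [map_mul, map_neg_eq_map, Complex.abs_ofReal, ← hWdef, abs_of_pos ht]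
  have hb1 : dist z Y ≤ p + (2 * t * ((conj' v₁) * (-w)).re + t ^ 2 * W ^ 2) / (2 * p) := by
    rw [cdist_eq, show z - Y = v₁ + (t : ℂ) * (-w) by rw [hzdef, hv₁def]; ring]
    simpa [← hWdef, ← hpdef] using abs_add_le_quad' v₁ (-w) t hv₁
  have hb2 : dist z Z ≤ q + (2 * t * ((conj' v₂) * (-w)).re + t ^ 2 * W ^ 2) / (2 * q) := by
    rw [cdist_eq, show z - Z = v₂ + (t : ℂ) * (-w) by rw [hzdef, hv₂def]; ring]
    simpa [← hWdef, ← hqdef] using abs_add_le_quad' v₂ (-w) t hv₂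
  -- main numeric estimate
  have hnum : t * W + (2 * t * (-(q * p ^ 2 + p * K)) + t ^ 2 * W ^ 2) / (2 * p)
      + (2 * t * (-(q * K + p * q ^ 2)) + t ^ 2 * W ^ 2) / (2 * q) < 0 := by
    have hnumeq : t * W + (2 * t * (-(q * p ^ 2 + p * K)) + t ^ 2 * W ^ 2) / (2 * p)
        + (2 * t * (-(q * K + p * q ^ 2)) + t ^ 2 * W ^ 2) / (2 * q)
        = (4 * p * q * t * W + 2 * q * (t ^ 2 * W ^ 2 - 2 * t * (q * p ^ 2 + p * K))
          + 2 * p * (t ^ 2 * W ^ 2 - 2 * t * (q * K + p * q ^ 2))) / (4 * (p * q)) := by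
      field_simp; ring
    rw [hnumeq]
    apply div_neg_of_neg_of_pos
    · have hkey : 4 * p * q * t * W + 2 * q * (t ^ 2 * W ^ 2 - 2 * t * (q * p ^ 2 + p * K))
          + 2 * p * (t ^ 2 * W ^ 2 - 2 * t * (q * K + p * q ^ 2))
          = 2 * t * W * (p * q - W) := by
        linear_combination (4 * t) * hW2 + (2 * t * W) * hteq
      rw [hkey]
      have h1 : 0 < 2 * t * W := by positivity
      have h2 : p * q - W < 0 := by linarith
      exact mul_neg_of_pos_of_neg h1 h2
    · positivity
  refine ⟨z, ?_⟩
  have hXY : dist X Y = p := by rw [cdist_eq, ← hv₁def, ← hpdef]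
  have hXZ : dist X Z = q := by rw [cdist_eq, ← hv₂def, ← hqdef]
  rw [hXY, hXZ, hzX]
  rw [hI1] at hb1
  rw [hI2] at hb2
  linarith [hb1, hb2, hnum]

open EuclideanGeometry Real

/-- For a triangle `ABC` in the Euclidean plane with side lengths
`a = dist B C ≤ b = dist A C ≤ c = dist A B` and `c² < a² + b² + a·b`, the infimum over
all points `P` of `dist P A + dist P B + dist P C` equals
`√((a² + b² + c² + 4√3·Δ)/2)` where `s = (a+b+c)/2` and `Δ = √(s(s−a)(s−b)(s−c))`. -/
theorem stmt_8 (A B C : EuclideanSpace ℝ (Fin 2)) (a b c s Δ : ℝ)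
    (ha : a = dist B C) (hb : b = dist A C) (hc : c = dist A B)
    (hab : a ≤ b) (hbc : b ≤ c) (hlt : c ^ 2 < a ^ 2 + b ^ 2 + a * b)
    (hs : s = (a + b + c) / 2)
    (hΔ : Δ = Real.sqrt (s * (s - a) * (s - b) * (s - c))) :
    (⨅ P : EuclideanSpace ℝ (Fin 2), (dist P A + dist P B + dist P C)) =
      Real.sqrt ((a ^ 2 + b ^ 2 + c ^ 2 + 4 * Real.sqrt 3 * Δ) / 2) := by
  -- transport to ℂ
  set T := Complex.orthonormalBasisOneI.repr with hT
  set A' := T.symm A with hA'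
  set B' := T.symm B with hB'
  set C' := T.symm C with hC'
  have hdist : ∀ x y : EuclideanSpace ℝ (Fin 2), dist x y = dist (T.symm x) (T.symm y) :=
    fun x y => (T.symm.dist_map x y).symm
  have htrans : (⨅ P : EuclideanSpace ℝ (Fin 2), (dist P A + dist P B + dist P C))
      = ⨅ z : ℂ, (dist z A' + dist z B' + dist z C') := by
    rw [iInf, iInf]
    congr 1
    ext x
    simp only [Set.mem_range]
    constructor
    · rintro ⟨P, rfl⟩
      exact ⟨T.symm P, by rw [← hdist P A, ← hdist P B, ← hdist P C]⟩
    · rintro ⟨z, rfl⟩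
      refine ⟨T z, ?_⟩
      rw [hdist (T z) A, hdist (T z) B, hdist (T z) C]
      simp [hA', hB', hC']
  rw [htrans]
  have ha' : a = Complex.abs (B' - C') := by
    rw [ha, hdist B C, ← cdist_eq]
  have hb' : b = Complex.abs (A' - C') := by
    rw [hb, hdist A C, ← cdist_eq]
  have hc' : c = Complex.abs (A' - B') := by
    rw [hc, hdist A B, ← cdist_eq]
  clear_value A' B' C'
  clear ha hb hc hdist htrans hT hA' hB' hC'
  -- basic positivity
  have ha0 : 0 ≤ a := by rw [ha']; exact Complex.abs.nonneg _
  have hb0 : 0 ≤ b := by rw [hb']; exact Complex.abs.nonneg _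
  have hc0 : 0 ≤ c := by rw [hc']; exact Complex.abs.nonneg _
  have hapos : 0 < a := by
    rcases lt_or_eq_of_le ha0 with h | h
    · exact h
    · exfalso; nlinarith
  have hbpos : 0 < b := lt_of_lt_of_le hapos hab
  have hcpos : 0 < c := lt_of_lt_of_le hbpos hbc
  have hBC : B' ≠ C' := by
    intro h; rw [h] at ha'; simp at ha'; rw [ha'] at hapos; exact lt_irrefl 0 hapos
  have hAC : A' ≠ C' := by
    intro h; rw [h] at hb'; simp at hb'; rw [hb'] at hbpos; exact lt_irrefl 0 hbpos
  have hAB : A' ≠ B' := by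
    intro h; rw [h] at hc'; simp at hc'; rw [hc'] at hcpos; exact lt_irrefl 0 hcpos
  -- sqrt 3
  set r := Real.sqrt 3 with hrdef
  have hr : r ^ 2 = 3 := Real.sq_sqrt (by norm_num)
  have hr0 : 0 ≤ r := Real.sqrt_nonneg 3
  set ω := om r with hω
  have hωsum := om_sum r hr
  have hωabs := om_abs r hr
  -- the two pivots
  set e₁ := A' + ω * B' + ω ^ 2 * C' with he₁
  set e₂ := A' + ω ^ 2 * B' + ω * C' with he₂
  set E₁ := Complex.abs e₁ with hE₁
  set E₂ := Complex.abs e₂ with hE₂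
  -- lower bounds
  have hlow1 : ∀ z : ℂ, E₁ ≤ dist z A' + dist z B' + dist z C' := by
    intro z
    have hexp : e₁ = (A' - z) + ω * (B' - z) + ω ^ 2 * (C' - z) := by
      rw [he₁]; linear_combination z * hωsum
    calc E₁ = Complex.abs ((A' - z) + (ω * (B' - z) + ω ^ 2 * (C' - z))) := by
            rw [hE₁, hexp]; ring_nf
      _ ≤ Complex.abs (A' - z) + Complex.abs (ω * (B' - z) + ω ^ 2 * (C' - z)) :=
            Complex.abs.add_le _ _
      _ ≤ Complex.abs (A' - z) + (Complex.abs (ω * (B' - z)) + Complex.abs (ω ^ 2 * (C' - z))) :=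
            by linarith [Complex.abs.add_le (ω * (B' - z)) (ω ^ 2 * (C' - z))]
      _ = dist z A' + dist z B' + dist z C' := by
            rw [map_mul, map_mul, map_pow, hωabs, cdist_eq, cdist_eq,
              cdist_eq, Complex.abs.map_sub z A', Complex.abs.map_sub z B',
              Complex.abs.map_sub z C']
            ring
  have hlow2 : ∀ z : ℂ, E₂ ≤ dist z A' + dist z B' + dist z C' := by
    intro z
    have hexp : e₂ = (A' - z) + ω ^ 2 * (B' - z) + ω * (C' - z) := by
      rw [he₂]; linear_combination z * hωsum
    calc E₂ = Complex.abs ((A' - z) + (ω ^ 2 * (B' - z) + ω * (C' - z))) := by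
            rw [hE₂, hexp]; ring_nf
      _ ≤ Complex.abs (A' - z) + Complex.abs (ω ^ 2 * (B' - z) + ω * (C' - z)) :=
            Complex.abs.add_le _ _
      _ ≤ Complex.abs (A' - z) + (Complex.abs (ω ^ 2 * (B' - z)) + Complex.abs (ω * (C' - z))) :=
            by linarith [Complex.abs.add_le (ω ^ 2 * (B' - z)) (ω * (C' - z))]
      _ = dist z A' + dist z B' + dist z C' := by
            rw [map_mul, map_mul, map_pow, hωabs, cdist_eq, cdist_eq,
              cdist_eq, Complex.abs.map_sub z A', Complex.abs.map_sub z B',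
              Complex.abs.map_sub z C']
            ring
  -- existence of a global minimizer
  set f : ℂ → ℝ := fun z => dist z A' + dist z B' + dist z C' with hf
  have hcont : Continuous f := by
    apply Continuous.add
    apply Continuous.add
    · exact continuous_id.dist continuous_const
    · exact continuous_id.dist continuous_const
    · exact continuous_id.dist continuous_const
  set R := dist A' B' + dist A' C' with hR
  have hR0 : 0 ≤ R := by positivity
  obtain ⟨P₀, hP₀mem, hP₀min⟩ :=
    (isCompact_closedBall A' R).exists_isMinOn ⟨A', Metric.mem_closedBall_self hR0⟩
      hcont.continuousOn
  have hfA : f A' = R := by simp [hf, hR]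
  have hglobal : ∀ z : ℂ, f P₀ ≤ f z := by
    intro z
    by_cases hz : z ∈ Metric.closedBall A' R
    · exact hP₀min hz
    · have h1 : R < dist z A' := by
        rw [Metric.mem_closedBall] at hz; linarith [not_le.mp hz]
      have h2 : f P₀ ≤ R := by
        rw [← hfA]; exact hP₀min (Metric.mem_closedBall_self hR0)
      have : dist z A' ≤ f z := by
        have h1 := dist_nonneg (x := z) (y := B')
        have h2 := dist_nonneg (x := z) (y := C')
        show dist z A' ≤ dist z A' + dist z B' + dist z C'
        linarith
      linarith
  -- the infimum equals f P₀
  have hinf : (⨅ z : ℂ, (dist z A' + dist z B' + dist z C')) = f P₀ := by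
    apply le_antisymm
    · exact ciInf_le ⟨0, by rintro x ⟨z, rfl⟩; positivity⟩ P₀
    · exact le_ciInf hglobal
  rw [hinf]
  -- P₀ is not a vertex
  have hPA : P₀ ≠ A' := by
    intro h
    obtain ⟨z, hz⟩ := vertex_better A' B' C' (Ne.symm hAB) (Ne.symm hAC)
      (by rw [← ha', ← hb', ← hc']; nlinarith)
    have := hglobal z
    rw [h] at this
    simp only [hf] at this hz
    have hAA : dist A' A' = 0 := dist_self A'
    linarith
  have hPB : P₀ ≠ B' := by
    intro h
    obtain ⟨z, hz⟩ := vertex_better B' A' C' hAB (Ne.symm hBC)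
      (by
        rw [show Complex.abs (A' - C') = b by rw [hb'],
          show Complex.abs (B' - A') = c by rw [hc']; exact Complex.abs.map_sub B' A',
          show Complex.abs (B' - C') = a by rw [ha']]
        nlinarith)
    have := hglobal z
    rw [h] at this
    simp only [hf] at this hz
    have hBB : dist B' B' = 0 := dist_self B'
    linarith [dist_comm B' A']
  have hPC : P₀ ≠ C' := by
    intro h
    obtain ⟨z, hz⟩ := vertex_better C' A' B' hAC hBC
      (by
        rw [show Complex.abs (A' - B') = c by rw [hc'],
          show Complex.abs (C' - A') = b by rw [hb']; exact Complex.abs.map_sub C' A',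
          show Complex.abs (C' - B') = a by rw [ha']; exact Complex.abs.map_sub C' B']
        nlinarith)
    have := hglobal z
    rw [h] at this
    simp only [hf] at this hz
    have hCC : dist C' C' = 0 := dist_self C'
    linarith [dist_comm C' A', dist_comm C' B']
  -- stationarity
  have hstat := stationary A' B' C' P₀ hPA hPB hPC (by intro z; exact hglobal z)
  set m₁ := Complex.abs (P₀ - A') with hm₁
  set m₂ := Complex.abs (P₀ - B') with hm₂
  set m₃ := Complex.abs (P₀ - C') with hm₃
  have hv₁ : P₀ - A' ≠ 0 := sub_ne_zero.mpr hPA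
  have hv₂ : P₀ - B' ≠ 0 := sub_ne_zero.mpr hPB
  have hv₃ : P₀ - C' ≠ 0 := sub_ne_zero.mpr hPC
  have hm₁0 : 0 < m₁ := Complex.abs.pos hv₁
  have hm₂0 : 0 < m₂ := Complex.abs.pos hv₂
  have hm₃0 : 0 < m₃ := Complex.abs.pos hv₃
  set u₁ := (P₀ - A') / (m₁ : ℂ) with hu₁
  set u₂ := (P₀ - B') / (m₂ : ℂ) with hu₂
  set u₃ := (P₀ - C') / (m₃ : ℂ) with hu₃
  have habsu : ∀ (v : ℂ) (m : ℝ), m = Complex.abs v → 0 < m → Complex.abs (v / (m:ℂ)) = 1 := by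
    intro v m hm hm0
    rw [map_div₀, Complex.abs_ofReal, ← hm, abs_of_pos hm0, div_self hm0.ne']
  have hconjmul : ∀ (v : ℂ) (m : ℝ), m = Complex.abs v → 0 < m →
      conj' (v / (m:ℂ)) * v = (m : ℂ) := by
    intro v m hm hm0
    rw [map_div₀, Complex.conj_ofReal, div_mul_eq_mul_div,
      show conj' v * v = v * conj' v by ring, Complex.mul_conj, Complex.normSq_eq_abs, ← hm]
    have hne : (m : ℂ) ≠ 0 := Complex.ofReal_ne_zero.mpr hm0.ne'
    push_cast
    field_simp
  have hcases := units_structure r hr u₁ u₂ u₃ (habsu _ _ hm₁ hm₁0) (habsu _ _ hm₂ hm₂0)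
    (habsu _ _ hm₃ hm₃0) hstat
  have habsu₁ : Complex.abs u₁ = 1 := habsu _ _ hm₁ hm₁0
  -- in both cases f P₀ = E₂ or E₁
  have hfP₀ : f P₀ = m₁ + m₂ + m₃ := by
    simp only [hf, cdist_eq, hm₁, hm₂, hm₃]
  have hkey : f P₀ = E₂ ∨ f P₀ = E₁ := by
    rcases hcases with ⟨h2, h3⟩ | ⟨h2, h3⟩
    · left
      have hsum : ((m₁ + m₂ + m₃ : ℝ) : ℂ) = -(conj' u₁) * e₂ := by
        have c1 : conj' u₁ * (P₀ - A') = (m₁ : ℂ) := hconjmul _ _ hm₁ hm₁0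
        have c2 : conj' u₂ * (P₀ - B') = (m₂ : ℂ) := hconjmul _ _ hm₂ hm₂0
        have c3 : conj' u₃ * (P₀ - C') = (m₃ : ℂ) := hconjmul _ _ hm₃ hm₃0
        have h2' : conj' u₂ = conj' u₁ * ω ^ 2 := by
          rw [h2, map_mul, ← om_sq r hr, hω]
        have h3' : conj' u₃ = conj' u₁ * ω := by
          rw [h3, map_mul, om_conj_sq r hr, hω]
        push_cast
        rw [← c1, ← c2, ← c3, h2', h3']
        rw [he₂]
        linear_combination (conj' u₁ * P₀) * hωsum
      have : m₁ + m₂ + m₃ = Complex.abs ((m₁ + m₂ + m₃ : ℝ) : ℂ) := by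
        rw [Complex.abs_ofReal, abs_of_pos (by linarith)]
      rw [hfP₀, this, hsum]
      rw [map_mul, map_neg_eq_map, Complex.abs_conj, habsu₁, one_mul, hE₂]
    · right
      have hsum : ((m₁ + m₂ + m₃ : ℝ) : ℂ) = -(conj' u₁) * e₁ := by
        have c1 : conj' u₁ * (P₀ - A') = (m₁ : ℂ) := hconjmul _ _ hm₁ hm₁0
        have c2 : conj' u₂ * (P₀ - B') = (m₂ : ℂ) := hconjmul _ _ hm₂ hm₂0
        have c3 : conj' u₃ * (P₀ - C') = (m₃ : ℂ) := hconjmul _ _ hm₃ hm₃0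
        have h2' : conj' u₂ = conj' u₁ * ω := by
          rw [h2, map_mul, om_conj_sq r hr, hω]
        have h3' : conj' u₃ = conj' u₁ * ω ^ 2 := by
          rw [h3, map_mul, ← om_sq r hr, hω]
        push_cast
        rw [← c1, ← c2, ← c3, h2', h3']
        rw [he₁]
        linear_combination (conj' u₁ * P₀) * hωsum
      have : m₁ + m₂ + m₃ = Complex.abs ((m₁ + m₂ + m₃ : ℝ) : ℂ) := by
        rw [Complex.abs_ofReal, abs_of_pos (by linarith)]
      rw [hfP₀, this, hsum]
      rw [map_mul, map_neg_eq_map, Complex.abs_conj, habsu₁, one_mul, hE₁]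
  have hfmax : f P₀ = max E₁ E₂ := by
    have l1 : E₁ ≤ f P₀ := hlow1 P₀
    have l2 : E₂ ≤ f P₀ := hlow2 P₀
    rcases hkey with h | h
    · rw [h]; exact (max_eq_right (by linarith)).symm
    · rw [h]; exact (max_eq_left (by linarith)).symm
  rw [hfmax]
  -- ======== the algebraic identification ========
  have hplus : e₁ + e₂ = A' + A' - B' - C' := by
    rw [he₁, he₂]; linear_combination (B' + C') * hωsum
  have hminus : e₁ - e₂ = (r : ℂ) * Complex.I * (B' - C') := by
    rw [he₁, he₂]; linear_combination (B' - C') * (om_diff r hr)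
  have ha2 : a ^ 2 = Complex.normSq (B' - C') := by rw [ha', Complex.sq_abs]
  have hb2 : b ^ 2 = Complex.normSq (A' - C') := by rw [hb', Complex.sq_abs]
  have hc2 : c ^ 2 = Complex.normSq (A' - B') := by rw [hc', Complex.sq_abs]
  have hrI : Complex.normSq ((r : ℂ) * Complex.I) = 3 := by
    rw [Complex.normSq_mul, Complex.normSq_ofReal, Complex.normSq_I, mul_one]
    linear_combination hr
  have hsumsq : E₁ ^ 2 + E₂ ^ 2 = a ^ 2 + b ^ 2 + c ^ 2 := by
    have h1 : Complex.normSq (e₁ + e₂) + Complex.normSq (e₁ - e₂)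
        = 2 * Complex.normSq e₁ + 2 * Complex.normSq e₂ := by
      simp only [Complex.normSq_apply, Complex.add_re, Complex.add_im, Complex.sub_re,
        Complex.sub_im]
      ring
    rw [hplus, hminus, Complex.normSq_mul ((r:ℂ) * Complex.I), hrI] at h1
    have hgeom : Complex.normSq (A' + A' - B' - C') + 3 * Complex.normSq (B' - C')
        = 2 * Complex.normSq (B' - C') + 2 * Complex.normSq (A' - C')
          + 2 * Complex.normSq (A' - B') := by
      simp only [Complex.normSq_apply, Complex.add_re, Complex.add_im, Complex.sub_re,
        Complex.sub_im]
      ring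
    have hE1sq : E₁ ^ 2 = Complex.normSq e₁ := by rw [hE₁, Complex.sq_abs]
    have hE2sq : E₂ ^ 2 = Complex.normSq e₂ := by rw [hE₂, Complex.sq_abs]
    rw [hE1sq, hE2sq, ha2, hb2, hc2]
    linarith [h1, hgeom]
  set τ := ((conj' (A' + A' - B' - C')) * (Complex.I * (B' - C'))).re with hτdef
  have hdiff : E₁ ^ 2 - E₂ ^ 2 = r * τ := by
    have h1 : Complex.normSq e₁ - Complex.normSq e₂
        = ((conj' (e₁ + e₂)) * (e₁ - e₂)).re := by
      simp only [Complex.normSq_apply, Complex.mul_re, Complex.add_re, Complex.add_im,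
        Complex.sub_re, Complex.sub_im, Complex.conj_re, Complex.conj_im]
      ring
    rw [hplus, hminus] at h1
    have h2 : ((conj' (A' + A' - B' - C')) * ((r : ℂ) * Complex.I * (B' - C'))).re
        = r * τ := by
      rw [show (conj' (A' + A' - B' - C')) * ((r : ℂ) * Complex.I * (B' - C'))
          = (r : ℂ) * ((conj' (A' + A' - B' - C')) * (Complex.I * (B' - C'))) by ring,
        Complex.re_ofReal_mul, hτdef]
    rw [h2] at h1
    have hE1sq : E₁ ^ 2 = Complex.normSq e₁ := by rw [hE₁, Complex.sq_abs]
    have hE2sq : E₂ ^ 2 = Complex.normSq e₂ := by rw [hE₂, Complex.sq_abs]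
    rw [hE1sq, hE2sq, h1]
  have hτsq : τ ^ 2 = 2 * (a ^ 2 * b ^ 2 + b ^ 2 * c ^ 2 + c ^ 2 * a ^ 2)
      - a ^ 4 - b ^ 4 - c ^ 4 := by
    rw [show (a:ℝ) ^ 4 = (a ^ 2) ^ 2 by ring, show (b:ℝ) ^ 4 = (b ^ 2) ^ 2 by ring,
      show (c:ℝ) ^ 4 = (c ^ 2) ^ 2 by ring, ha2, hb2, hc2, hτdef]
    simp only [Complex.normSq_apply, Complex.mul_re, Complex.mul_im, Complex.add_re,
      Complex.add_im, Complex.sub_re, Complex.sub_im, Complex.conj_re, Complex.conj_im,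
      Complex.I_re, Complex.I_im]
    ring
  have hHeron : s * (s - a) * (s - b) * (s - c) = τ ^ 2 / 16 := by
    rw [hs]
    linear_combination (-1/16 : ℝ) * hτsq
  have hH0 : 0 ≤ s * (s - a) * (s - b) * (s - c) := by rw [hHeron]; positivity
  have hΔ0 : 0 ≤ Δ := by rw [hΔ]; exact Real.sqrt_nonneg _
  have hΔsq : Δ ^ 2 = s * (s - a) * (s - b) * (s - c) := by
    rw [hΔ]; exact Real.sq_sqrt hH0
  have hd2 : Δ ^ 2 = τ ^ 2 / 16 := by rw [hΔsq, hHeron]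
  have h4r : 4 * r * Δ = |E₁ ^ 2 - E₂ ^ 2| := by
    have h1 : (4 * r * Δ) ^ 2 = (E₁ ^ 2 - E₂ ^ 2) ^ 2 := by
      rw [hdiff]
      linear_combination (16 * Δ ^ 2 - τ ^ 2) * hr + 48 * hd2
    have h2 : 0 ≤ 4 * r * Δ := by positivity
    calc 4 * r * Δ = Real.sqrt ((4 * r * Δ) ^ 2) := (Real.sqrt_sq h2).symm
      _ = Real.sqrt ((E₁ ^ 2 - E₂ ^ 2) ^ 2) := by rw [h1]
      _ = |E₁ ^ 2 - E₂ ^ 2| := Real.sqrt_sq_eq_abs _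
  have hE₁0 : 0 ≤ E₁ := by rw [hE₁]; exact Complex.abs.nonneg _
  have hE₂0 : 0 ≤ E₂ := by rw [hE₂]; exact Complex.abs.nonneg _
  have hmax0 : 0 ≤ max E₁ E₂ := le_trans hE₁0 (le_max_left _ _)
  have hfinal : (a ^ 2 + b ^ 2 + c ^ 2 + 4 * r * Δ) / 2 = (max E₁ E₂) ^ 2 := by
    rw [h4r, ← hsumsq]
    rcases le_total E₁ E₂ with h | h
    · rw [max_eq_right h, abs_of_nonpos (sub_nonpos.mpr (pow_le_pow_left₀ hE₁0 h 2))]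
      ring
    · rw [max_eq_left h, _root_.abs_of_nonneg (sub_nonneg.mpr (pow_le_pow_left₀ hE₂0 h 2))]
      ring
  rw [hfinal, Real.sqrt_sq hmax0]
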